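/- Greedy extraction of disjoint cycles from dense graphs via even-cycle extremal numbers: Let ℓ ≥ 4 be even and suppose every n-vertex graph with more than K n^{1+2/ℓ} edges contains a copy of C_ℓ. Let G be an n-vertex graph with minimum degree at least m and maximum degree Δ(G) < n/(32⌊ℓ/2⌋), where m ≥ M√n with M = 16ℓ, m ≤ n/(16⌈ℓ/2⌉), and n is sufficiently large so that nm/3 ≥ K n^{1+2/ℓ}. Then G contains at least m pairwise vertex-disjoint copies of C_ℓ. -/

import Mathlib

open SimpleGraph

/-- Greedy extraction of disjoint cycles from dense graphs via even-cycle extremal numbers.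
If every graph with more than `K·(#vertices)^{1+2/ℓ}` edges contains a copy of `C_ℓ`
(Bondy–Simonovits), and `G` is an `n`-vertex graph with `δ(G) ≥ m ≥ 16ℓ√n`,
`m ≤ n/(16⌈ℓ/2⌉)`, `Δ(G) < n/(32⌊ℓ/2⌋)`, and `n` large enough that `nm/3 ≥ K n^{1+2/ℓ}`,
then `G` contains `m` pairwise vertex-disjoint copies of `C_ℓ`. -/
theorem greedy_disjoint_even_cycles
    (ℓ : ℕ) (hℓ : 4 ≤ ℓ) (hev : Even ℓ) (K : ℝ) (hK : 0 < K)
    (hex : ∀ (k : ℕ) (H : SimpleGraph (Fin k)),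
      K * (k : ℝ) ^ ((1 : ℝ) + 2 / ℓ) < (H.edgeSet.ncard : ℝ) →
      ∃ f : Fin ℓ → Fin k, Function.Injective f ∧
        ∀ a b : Fin ℓ, (cycleGraph ℓ).Adj a b → H.Adj (f a) (f b))
    (n m : ℕ) (G : SimpleGraph (Fin n))
    (hδ : ∀ v : Fin n, m ≤ {w | G.Adj v w}.ncard)
    (hΔ : ∀ v : Fin n, ({w | G.Adj v w}.ncard : ℝ) < (n : ℝ) / (32 * (ℓ / 2 : ℕ)))
    (hm₁ : 16 * (ℓ : ℝ) * Real.sqrt n ≤ m)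
    (hm₂ : (m : ℝ) ≤ (n : ℝ) / (16 * ((ℓ + 1) / 2 : ℕ)))
    (hlarge : K * (n : ℝ) ^ ((1 : ℝ) + 2 / ℓ) ≤ (n : ℝ) * m / 3) :
    ∃ f : Fin m → Fin ℓ → Fin n,
      (∀ i, Function.Injective (f i) ∧
        ∀ a b : Fin ℓ, (cycleGraph ℓ).Adj a b → G.Adj (f i a) (f i b)) ∧
      ∀ i j : Fin m, i ≠ j → ∀ a b : Fin ℓ, f i a ≠ f j b := by
  classical
  -- trivial case m = 0
  rcases Nat.eq_zero_or_pos m with hm0 | hmpos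
  · subst hm0
    exact ⟨fun i => i.elim0, fun i => i.elim0, fun i => i.elim0⟩
  -- n > 0
  have hn0 : 0 < n := by
    by_contra h
    push_neg at h
    interval_cases n
    simp only [Nat.cast_zero, zero_div] at hm₂
    have : (0 : ℝ) < m := by exact_mod_cast hmpos
    linarith
  -- translate degree hypotheses
  have hdeg : ∀ v : Fin n, {w | G.Adj v w}.ncard = G.degree v := by
    intro v
    have : {w | G.Adj v w} = ↑(G.neighborFinset v) := by
      ext w; simp [SimpleGraph.mem_neighborFinset]
    rw [this, Set.ncard_coe_finset, SimpleGraph.card_neighborFinset_eq_degree]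
  have hδ' : ∀ v : Fin n, m ≤ G.degree v := fun v => by rw [← hdeg]; exact hδ v
  have hΔ' : ∀ v : Fin n, (G.degree v : ℝ) < (n : ℝ) / (32 * (ℓ / 2 : ℕ)) := fun v => by
    rw [← hdeg]; exact hΔ v
  -- ℓ/2 arithmetic
  have hq : (ℓ / 2) * 2 = ℓ := Nat.div_mul_cancel hev.two_dvd
  have hqpos : 0 < ℓ / 2 := by omega
  -- total edge count lower bound
  have h2E : (n * m : ℕ) ≤ 2 * G.edgeFinset.card := by
    calc n * m = ∑ _v : Fin n, m := by simp [Finset.sum_const, Finset.card_univ, mul_comm]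
    _ ≤ ∑ v : Fin n, G.degree v := Finset.sum_le_sum fun v _ => hδ' v
    _ = 2 * G.edgeFinset.card := G.sum_degrees_eq_twice_card_edges
  have hE : ((n : ℝ) * m) / 2 ≤ (G.edgeFinset.card : ℝ) := by
    have : ((n * m : ℕ) : ℝ) ≤ ((2 * G.edgeFinset.card : ℕ) : ℝ) := by exact_mod_cast h2E
    push_cast at this
    linarith
  -- key claim: can find a cycle avoiding any set of ≤ m*ℓ vertices
  have key : ∀ S : Finset (Fin n), S.card ≤ m * ℓ →
      ∃ g : Fin ℓ → Fin n, Function.Injective g ∧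
        (∀ a b : Fin ℓ, (cycleGraph ℓ).Adj a b → G.Adj (g a) (g b)) ∧
        ∀ a : Fin ℓ, g a ∉ S := by
    intro S hS
    set H : SimpleGraph (Fin n) :=
      { Adj := fun v w => G.Adj v w ∧ v ∉ S ∧ w ∉ S
        symm := ⟨fun v w h => ⟨h.1.symm, h.2.2, h.2.1⟩⟩
        loopless := ⟨fun v h => G.loopless.irrefl v h.1⟩ } with hHdef
    have hHsub : G.edgeFinset \ S.biUnion (fun v => G.incidenceFinset v) ⊆ H.edgeFinset := by
      intro e he
      rw [Finset.mem_sdiff] at he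
      obtain ⟨heG, hni⟩ := he
      rw [SimpleGraph.mem_edgeFinset] at heG ⊢
      induction e using Sym2.ind with
      | _ a b =>
        rw [SimpleGraph.mem_edgeSet] at heG ⊢
        have hnotinc : ∀ v ∈ S, s(a, b) ∉ G.incidenceSet v := by
          intro v hv hinc
          refine hni (Finset.mem_biUnion.mpr ⟨v, hv, ?_⟩)
          rw [SimpleGraph.mem_incidenceFinset]
          exact hinc
        refine ⟨heG, fun haS => ?_, fun hbS => ?_⟩
        · exact hnotinc a haS ⟨heG, Sym2.mem_mk_left a b⟩
        · exact hnotinc b hbS ⟨heG, Sym2.mem_mk_right a b⟩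
    -- edge count of H
    have hB : ((S.biUnion fun v => G.incidenceFinset v).card : ℝ) ≤ (n : ℝ) * m / 16 := by
      have h1 : (S.biUnion fun v => G.incidenceFinset v).card ≤ ∑ v ∈ S, (G.incidenceFinset v).card :=
        Finset.card_biUnion_le
      have h2 : (∑ v ∈ S, ((G.incidenceFinset v).card : ℝ)) ≤
          (S.card : ℝ) * ((n : ℝ) / (32 * (ℓ / 2 : ℕ))) := by
        have := Finset.sum_le_card_nsmul S (fun v => ((G.incidenceFinset v).card : ℝ))
          ((n : ℝ) / (32 * (ℓ / 2 : ℕ))) (fun v _ => by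
            show ((G.incidenceFinset v).card : ℝ) ≤ _
            rw [SimpleGraph.card_incidenceFinset_eq_degree]; exact (hΔ' v).le)
        rwa [nsmul_eq_mul] at this
      have h3 : (S.card : ℝ) ≤ (m * ℓ : ℕ) := by exact_mod_cast hS
      have hd : (0:ℝ) < (32 * (ℓ / 2 : ℕ)) := by positivity
      have h4 : ((m * ℓ : ℕ) : ℝ) * ((n : ℝ) / (32 * (ℓ / 2 : ℕ))) = (n : ℝ) * m / 16 := by
        have : (ℓ : ℝ) = 2 * ((ℓ / 2 : ℕ) : ℝ) := by
          rw [← Nat.cast_ofNat, ← Nat.cast_mul]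
          norm_cast
          omega
        push_cast [this]
        field_simp
        ring
      have hcast : ((S.biUnion fun v => G.incidenceFinset v).card : ℝ) ≤
          ∑ v ∈ S, ((G.incidenceFinset v).card : ℝ) := by exact_mod_cast h1
      have hnn : (0:ℝ) ≤ (n : ℝ) / (32 * (ℓ / 2 : ℕ)) := by positivity
      calc ((S.biUnion fun v => G.incidenceFinset v).card : ℝ)
          ≤ (S.card : ℝ) * ((n : ℝ) / (32 * (ℓ / 2 : ℕ))) := hcast.trans h2
        _ ≤ ((m * ℓ : ℕ) : ℝ) * ((n : ℝ) / (32 * (ℓ / 2 : ℕ))) := by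
            exact mul_le_mul_of_nonneg_right h3 hnn
        _ = (n : ℝ) * m / 16 := h4
    have hEH : (n : ℝ) * m / 2 - (n : ℝ) * m / 16 ≤ (H.edgeFinset.card : ℝ) := by
      have hs1 : G.edgeFinset.card ≤
          (G.edgeFinset \ S.biUnion (fun v => G.incidenceFinset v)).card +
            (S.biUnion fun v => G.incidenceFinset v).card :=
        Finset.card_le_card_sdiff_add_card
      have hs2 : (G.edgeFinset \ S.biUnion (fun v => G.incidenceFinset v)).card ≤
          H.edgeFinset.card := Finset.card_le_card hHsub
      have hs1' : (G.edgeFinset.card : ℝ) ≤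
          ((G.edgeFinset \ S.biUnion (fun v => G.incidenceFinset v)).card : ℝ) +
            ((S.biUnion fun v => G.incidenceFinset v).card : ℝ) := by exact_mod_cast hs1
      have hs2' : ((G.edgeFinset \ S.biUnion (fun v => G.incidenceFinset v)).card : ℝ) ≤
          (H.edgeFinset.card : ℝ) := by exact_mod_cast hs2
      linarith
    have hnm : (0 : ℝ) < (n : ℝ) * m := by
      have : (0:ℝ) < (n:ℝ) := by exact_mod_cast hn0
      have : (0:ℝ) < (m:ℝ) := by exact_mod_cast hmpos
      positivity
    have hstrict : K * (n : ℝ) ^ ((1 : ℝ) + 2 / ℓ) < (H.edgeSet.ncard : ℝ) := by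
      have hncard : (H.edgeSet.ncard : ℝ) = (H.edgeFinset.card : ℝ) := by
        rw [Set.ncard_eq_toFinset_card']
        congr 2
      rw [hncard]
      have : (n : ℝ) * m / 3 < (n : ℝ) * m / 2 - (n : ℝ) * m / 16 := by linarith
      linarith
    obtain ⟨g, hg1, hg2⟩ := hex n H hstrict
    refine ⟨g, hg1, fun a b hab => (hg2 a b hab).1, fun a => ?_⟩
    -- a is adjacent to a+1 in the cycle graph, so g a has an H-edge, hence g a ∉ S
    haveI : NeZero ℓ := ⟨by omega⟩
    have hadj : (cycleGraph ℓ).Adj a (a + 1) := by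
      rw [cycleGraph_adj']
      right
      have h1 : ((1 : Fin ℓ) : ℕ) = 1 := by
        rw [Fin.val_one']
        exact Nat.mod_eq_of_lt (by omega)
      rw [add_sub_cancel_left, h1]
    exact (hg2 a (a + 1) hadj).2.1
  -- greedy induction
  have main : ∀ j, j ≤ m → ∃ f : Fin j → Fin ℓ → Fin n,
      (∀ i, Function.Injective (f i) ∧
        ∀ a b : Fin ℓ, (cycleGraph ℓ).Adj a b → G.Adj (f i a) (f i b)) ∧
      ∀ i k : Fin j, i ≠ k → ∀ a b : Fin ℓ, f i a ≠ f k b := by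
    intro j
    induction j with
    | zero => exact fun _ => ⟨fun i => i.elim0, fun i => i.elim0, fun i => i.elim0⟩
    | succ j ih =>
      intro hj
      obtain ⟨f, hf1, hf2⟩ := ih (by omega)
      set S : Finset (Fin n) := Finset.univ.image (fun p : Fin j × Fin ℓ => f p.1 p.2) with hSdef
      have hScard : S.card ≤ m * ℓ := by
        calc S.card ≤ (Finset.univ : Finset (Fin j × Fin ℓ)).card := Finset.card_image_le
        _ = j * ℓ := by simp
        _ ≤ m * ℓ := Nat.mul_le_mul_right ℓ (by omega)
      obtain ⟨g, hg1, hg2, hg3⟩ := key S hScard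
      have hmem : ∀ (i : Fin j) (b : Fin ℓ), f i b ∈ S := fun i b =>
        Finset.mem_image.mpr ⟨(i, b), Finset.mem_univ _, rfl⟩
      refine ⟨Fin.snoc f g, ?_, ?_⟩
      · intro i
        induction i using Fin.lastCases with
        | last => simpa [Fin.snoc_last] using ⟨hg1, hg2⟩
        | cast i => simpa [Fin.snoc_castSucc] using hf1 i
      · intro i k hik a b
        induction i using Fin.lastCases with
        | last =>
          induction k using Fin.lastCases with
          | last => exact absurd rfl hik
          | cast k =>
            simp only [Fin.snoc_last, Fin.snoc_castSucc]
            intro h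
            exact hg3 a (h ▸ hmem k b)
        | cast i =>
          induction k using Fin.lastCases with
          | last =>
            simp only [Fin.snoc_last, Fin.snoc_castSucc]
            intro h
            exact hg3 b (h ▸ hmem i a)
          | cast k =>
            simp only [Fin.snoc_castSucc]
            exact hf2 i k (fun h => hik (by rw [h])) a b
  exact main m le_rfl
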